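/- arXiv:2503.18656 — 4 statements merged into one kernel-verified Lean document; each statement's English description precedes it below -/
import Mathlib

section
/- Let s ≥ 0. For any f, g ∈ B^s(ℝ^d), the pointwise product fg belongs to B^s(ℝ^d) and ‖fg‖_{B^s(ℝ^d)} ≤ ‖f‖_{B^s(ℝ^d)} ‖g‖_{B^s(ℝ^d)}. -/
open MeasureTheory Complex Filter
open scoped Convolution
set_option maxHeartbeats 1000000

noncomputable section

/-- Euclidean space `ℝ^d`. -/
abbrev Ed (d : ℕ) := EuclideanSpace ℝ (Fin d)

/-- The spectral Barron norm of a Fourier representative `F`. -/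
def barronNorm (d : ℕ) (s : ℝ) (F : Ed d → ℂ) : ℝ :=
  ∫ ξ, ‖F ξ‖ * (1 + ‖ξ‖) ^ s

/-- `F` is an (L¹) Fourier representative of `f` with finite spectral Barron norm of order `s`,
i.e. `f` lies in the spectral Barron space `B^s(ℝ^d)` with Fourier transform `F`. -/
structure BarronRep (d : ℕ) (s : ℝ) (f : Ed d → ℝ) (F : Ed d → ℂ) : Prop where
  intF : Integrable F
  intW : Integrable fun ξ => ‖F ξ‖ * (1 + ‖ξ‖) ^ s
  repr : ∀ x : Ed d, (f x : ℂ) = ∫ ξ, F ξ * Complex.exp (Complex.I * Complex.ofReal (inner ℝ x ξ))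

/-- Membership in the spectral Barron space `B^s(ℝ^d)`. -/
def MemBarron (d : ℕ) (s : ℝ) (f : Ed d → ℝ) : Prop := ∃ F, BarronRep d s f F

/-- Partial derivative in the `i`-th coordinate direction. -/
def pd (d : ℕ) (f : Ed d → ℝ) (i : Fin d) (x : Ed d) : ℝ :=
  fderiv ℝ f x (EuclideanSpace.single i 1)

/-- The Laplacian. -/
def lap (d : ℕ) (V : Ed d → ℝ) (x : Ed d) : ℝ :=
  ∑ i : Fin d, iteratedFDeriv ℝ 2 V x ![EuclideanSpace.single i 1, EuclideanSpace.single i 1]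

/-- Squared Sobolev `H^k(K)` norm (derivatives measured with iterated Fréchet derivatives). -/
def sobNormSq (d k : ℕ) (K : Set (Ed d)) (f : Ed d → ℝ) : ℝ :=
  ∑ m ∈ Finset.range (k + 1), ∫ x in K, ‖iteratedFDeriv ℝ m f x‖ ^ 2

/-- A cosine-activated two-layer neural network with `n` hidden neurons. -/
def twoLayerCos (d n : ℕ) (a : Fin n → ℝ) (w : Fin n → Ed d) (b : Fin n → ℝ) (x : Ed d) : ℝ :=
  (1 / (n : ℝ)) * ∑ j, a j * Real.cos (inner ℝ (w j) x + b j)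


private lemma weight_mul {E : Type*} [SeminormedAddCommGroup E] {s : ℝ} (hs : 0 ≤ s) (ξ η : E) :
    (1 + ‖ξ‖) ^ s ≤ (1 + ‖η‖) ^ s * (1 + ‖ξ - η‖) ^ s := by
  rw [← Real.mul_rpow (by positivity) (by positivity)]
  apply Real.rpow_le_rpow (by positivity) _ hs
  have h : ‖ξ‖ ≤ ‖η‖ + ‖ξ - η‖ := by simpa using norm_add_le η (ξ - η)
  nlinarith [norm_nonneg η, norm_nonneg (ξ - η)]

/-- for `s ≥ 0`, the spectral Barron space `B^s(ℝ^d)` is closed under pointwise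
products, with `‖fg‖_{B^s} ≤ ‖f‖_{B^s} ‖g‖_{B^s}`. -/
theorem barron_mul (d : ℕ) (s : ℝ) (hs : 0 ≤ s) (f g : Ed d → ℝ) (F G : Ed d → ℂ)
    (hF : BarronRep d s f F) (hG : BarronRep d s g G) :
    ∃ H : Ed d → ℂ, BarronRep d s (fun x => f x * g x) H ∧
      barronNorm d s H ≤ barronNorm d s F * barronNorm d s G := by
  classical
  set L := ContinuousLinearMap.mul ℂ ℂ with hL
  set Lr := ContinuousLinearMap.mul ℝ ℝ with hLr
  set Fw : Ed d → ℝ := fun ξ => ‖F ξ‖ * (1 + ‖ξ‖) ^ s with hFwd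
  set Gw : Ed d → ℝ := fun ξ => ‖G ξ‖ * (1 + ‖ξ‖) ^ s with hGwd
  have hconv : Integrable (Fw ⋆[Lr, volume] Gw) := hF.intW.integrable_convolution Lr hG.intW
  have hHi : Integrable (F ⋆[L, volume] G) := hF.intF.integrable_convolution L hG.intF
  have hae : ∀ᵐ ξ : Ed d, ‖(F ⋆[L, volume] G) ξ‖ * (1 + ‖ξ‖) ^ s ≤ (Fw ⋆[Lr, volume] Gw) ξ := by
    filter_upwards [hF.intW.ae_convolution_exists Lr hG.intW] with ξ hξ
    have hξ' : Integrable (fun η => Fw η * Gw (ξ - η)) := by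
      simpa [ConvolutionExistsAt, hLr] using hξ
    have h1 : ‖(F ⋆[L, volume] G) ξ‖ ≤ ∫ η, ‖F η‖ * ‖G (ξ - η)‖ := by
      rw [convolution_def]
      refine (norm_integral_le_integral_norm _).trans_eq ?_
      simp [hL, norm_mul]
    calc ‖(F ⋆[L, volume] G) ξ‖ * (1 + ‖ξ‖) ^ s
        ≤ (∫ η, ‖F η‖ * ‖G (ξ - η)‖) * (1 + ‖ξ‖) ^ s := by
          exact mul_le_mul_of_nonneg_right h1 (by positivity)
      _ = ∫ η, ‖F η‖ * ‖G (ξ - η)‖ * (1 + ‖ξ‖) ^ s := by rw [MeasureTheory.integral_mul_const]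
      _ ≤ ∫ η, Fw η * Gw (ξ - η) := by
          refine integral_mono_of_nonneg (ae_of_all _ fun η => by positivity) hξ'
            (ae_of_all _ fun η => ?_)
          have hw := weight_mul hs ξ η
          have hab : (0:ℝ) ≤ ‖F η‖ * ‖G (ξ - η)‖ := by positivity
          have := mul_le_mul_of_nonneg_left hw hab
          simp only [hFwd, hGwd]
          nlinarith [this]
      _ = (Fw ⋆[Lr, volume] Gw) ξ := by
          rw [convolution_def]; simp [hLr]
  -- weighted integrability
  have hwcont : Continuous fun ξ : Ed d => (1 + ‖ξ‖ : ℝ) ^ s :=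
    (continuous_const.add continuous_norm).rpow_const fun x => Or.inr hs
  have hHw : Integrable fun ξ => ‖(F ⋆[L, volume] G) ξ‖ * (1 + ‖ξ‖) ^ s := by
    refine hconv.mono' (hHi.aestronglyMeasurable.norm.mul hwcont.aestronglyMeasurable) ?_
    filter_upwards [hae] with ξ h
    rwa [Real.norm_of_nonneg (by positivity)]
  -- norm bound
  have hnorm : (∫ ξ, ‖(F ⋆[L, volume] G) ξ‖ * (1 + ‖ξ‖) ^ s) ≤
      (∫ ξ, Fw ξ) * (∫ ξ, Gw ξ) := by
    have h1 : (∫ ξ, ‖(F ⋆[L, volume] G) ξ‖ * (1 + ‖ξ‖) ^ s) ≤ ∫ ξ, (Fw ⋆[Lr, volume] Gw) ξ :=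
      integral_mono_of_nonneg (ae_of_all _ fun ξ => by positivity) hconv hae
    refine h1.trans_eq ?_
    simpa [hLr] using integral_convolution Lr hF.intW hG.intW
  -- representation
  have hrepr : ∀ x : Ed d, ((f x * g x : ℝ) : ℂ) =
      ∫ ξ, (F ⋆[L, volume] G) ξ * Complex.exp (Complex.I * Complex.ofReal (inner ℝ x ξ)) := by
    intro x
    set c : Ed d → ℂ := fun η => Complex.exp (Complex.I * Complex.ofReal (inner ℝ x η)) with hc
    have hcc : Continuous c := by
      exact Complex.continuous_exp.comp (continuous_const.mul
        (Complex.continuous_ofReal.comp ((continuous_const : Continuous fun _ : Ed d => x).inner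
          continuous_id)))
    have hnc : ∀ η, ‖c η‖ = 1 := by
      intro η
      simp [hc, Complex.norm_exp]
    have hF' : Integrable (fun η => F η * c η) := by
      refine hF.intF.norm.mono' (hF.intF.aestronglyMeasurable.mul hcc.aestronglyMeasurable)
        (ae_of_all _ fun η => ?_)
      rw [norm_mul, hnc, mul_one]
    have hG' : Integrable (fun η => G η * c η) := by
      refine hG.intF.norm.mono' (hG.intF.aestronglyMeasurable.mul hcc.aestronglyMeasurable)
        (ae_of_all _ fun η => ?_)
      rw [norm_mul, hnc, mul_one]
    have hcmul : ∀ ξ η : Ed d, c η * c (ξ - η) = c ξ := by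
      intro ξ η
      simp only [hc, ← Complex.exp_add]
      congr 1
      rw [inner_sub_right]
      push_cast
      ring
    have hptw : ∀ ξ, ((fun η => F η * c η) ⋆[L, volume] fun η => G η * c η) ξ =
        (F ⋆[L, volume] G) ξ * c ξ := by
      intro ξ
      rw [convolution_def, convolution_def, ← MeasureTheory.integral_mul_const]
      congr 1
      ext η
      simp only [hL, ContinuousLinearMap.mul_apply']
      rw [← hcmul ξ η]
      ring
    calc ((f x * g x : ℝ) : ℂ) = (f x : ℂ) * (g x : ℂ) := by push_cast; ring
      _ = (∫ η, F η * c η) * (∫ η, G η * c η) := by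
          simp only [hc]
          rw [hF.repr x, hG.repr x]
      _ = ∫ ξ, ((fun η => F η * c η) ⋆[L, volume] fun η => G η * c η) ξ := by
          simpa [hL] using (integral_convolution L hF' hG').symm
      _ = ∫ ξ, (F ⋆[L, volume] G) ξ * c ξ := by simp_rw [hptw]
  exact ⟨F ⋆[L, volume] G, ⟨hHi, hHw, hrepr⟩, by
    simpa [barronNorm, hFwd, hGwd] using hnorm⟩
end
end

section
/- Let s ≥ 0 and γ > 0. For every f ∈ B^s(ℝ^d), the function (γI − Δ)^{−1} f defined on the Fourier side by ((γI−Δ)^{−1}f)^(ξ) = f̂(ξ)/(γ + |ξ|²) satisfies the three bounds: ‖(γI−Δ)^{−1} f‖_{B^s(ℝ^d)} ≤ γ^{−1} ‖f‖_{B^s(ℝ^d)}, ‖(γI−Δ)^{−1} f‖_{B^{s+1}(ℝ^d)} ≤ (1/(2(√(1+γ) − 1))) ‖f‖_{B^s(ℝ^d)}, and ‖(γI−Δ)^{−1} f‖_{B^{s+2}(ℝ^d)} ≤ (1 + 1/γ) ‖f‖_{B^s(ℝ^d)}. -/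
open MeasureTheory Complex Filter

noncomputable section

/-- bounds for the resolvent `(γI - Δ)⁻¹` (division of the Fourier transform by
`γ + |ξ|²`) in spectral Barron norms of orders `s`, `s+1` and `s+2`. -/
theorem resolvent_bounds (d : ℕ) (s γ : ℝ) (hs : 0 ≤ s) (hγ : 0 < γ)
    (f : Ed d → ℝ) (F : Ed d → ℂ) (hF : BarronRep d s f F)
    (G : Ed d → ℂ) (hG : ∀ ξ, G ξ = F ξ / ((γ + ‖ξ‖ ^ 2 : ℝ) : ℂ)) :
    (Integrable fun ξ => ‖G ξ‖ * (1 + ‖ξ‖) ^ s) ∧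
    (Integrable fun ξ => ‖G ξ‖ * (1 + ‖ξ‖) ^ (s + 1)) ∧
    (Integrable fun ξ => ‖G ξ‖ * (1 + ‖ξ‖) ^ (s + 2)) ∧
    barronNorm d s G ≤ γ⁻¹ * barronNorm d s F ∧
    barronNorm d (s + 1) G ≤ (1 / (2 * (Real.sqrt (1 + γ) - 1))) * barronNorm d s F ∧
    barronNorm d (s + 2) G ≤ (1 + 1 / γ) * barronNorm d s F := by
  have hb1 : 1 < Real.sqrt (1 + γ) := by
    have h := Real.sqrt_lt_sqrt (by norm_num : (0:ℝ) ≤ 1) (by linarith : (1:ℝ) < 1 + γ)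
    simpa using h
  have hsq : Real.sqrt (1 + γ) ^ 2 = 1 + γ := Real.sq_sqrt (by linarith)
  have hden : ∀ ξ : Ed d, (0:ℝ) < γ + ‖ξ‖ ^ 2 := fun ξ => by positivity
  have h1r : ∀ ξ : Ed d, (0:ℝ) < 1 + ‖ξ‖ := fun ξ => by positivity
  have hnorm : ∀ ξ : Ed d, ‖G ξ‖ = ‖F ξ‖ / (γ + ‖ξ‖ ^ 2) := by
    intro ξ
    rw [hG, norm_div, Complex.norm_real, Real.norm_of_nonneg (hden ξ).le]
  have hGm : AEStronglyMeasurable G (volume : Measure (Ed d)) := by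
    have hfe : G = fun ξ => F ξ * ((γ + ‖ξ‖ ^ 2 : ℝ) : ℂ)⁻¹ := by
      funext ξ; rw [hG ξ, div_eq_mul_inv]
    rw [hfe]
    refine hF.intF.aestronglyMeasurable.mul (Continuous.aestronglyMeasurable ?_)
    refine Continuous.inv₀ (Complex.continuous_ofReal.comp (by continuity)) ?_
    intro ξ
    exact_mod_cast Complex.ofReal_ne_zero.mpr (hden ξ).ne' 
  have main : ∀ c t : ℝ, (∀ r : ℝ, 0 ≤ r → (1 + r) ^ t ≤ c * (γ + r ^ 2)) →
      (Integrable fun ξ : Ed d => ‖G ξ‖ * (1 + ‖ξ‖) ^ (s + t)) ∧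
      barronNorm d (s + t) G ≤ c * barronNorm d s F := by
    intro c t hc
    have ptw : ∀ ξ : Ed d, ‖G ξ‖ * (1 + ‖ξ‖) ^ (s + t) ≤ c * (‖F ξ‖ * (1 + ‖ξ‖) ^ s) := by
      intro ξ
      have hk := hc ‖ξ‖ (norm_nonneg ξ)
      have hnn : 0 ≤ ‖F ξ‖ * (1 + ‖ξ‖) ^ s :=
        mul_nonneg (norm_nonneg _) (Real.rpow_nonneg (h1r ξ).le s)
      rw [hnorm ξ, Real.rpow_add (h1r ξ), div_mul_eq_mul_div, div_le_iff₀ (hden ξ)]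
      calc ‖F ξ‖ * ((1 + ‖ξ‖) ^ s * (1 + ‖ξ‖) ^ t)
          = (‖F ξ‖ * (1 + ‖ξ‖) ^ s) * (1 + ‖ξ‖) ^ t := by ring
        _ ≤ (‖F ξ‖ * (1 + ‖ξ‖) ^ s) * (c * (γ + ‖ξ‖ ^ 2)) :=
            mul_le_mul_of_nonneg_left hk hnn
        _ = c * (‖F ξ‖ * (1 + ‖ξ‖) ^ s) * (γ + ‖ξ‖ ^ 2) := by ring
    have hmeas : AEStronglyMeasurable (fun ξ : Ed d => ‖G ξ‖ * (1 + ‖ξ‖) ^ (s + t))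
        (volume : Measure (Ed d)) := by
      refine hGm.norm.mul (Continuous.aestronglyMeasurable ?_)
      exact (continuous_const.add continuous_norm).rpow_const
        (fun ξ => Or.inl (h1r ξ).ne')
    have hint : Integrable fun ξ : Ed d => ‖G ξ‖ * (1 + ‖ξ‖) ^ (s + t) := by
      refine (hF.intW.const_mul c).mono' hmeas (Filter.Eventually.of_forall fun ξ => ?_)
      rw [Real.norm_of_nonneg (mul_nonneg (norm_nonneg _) (Real.rpow_nonneg (h1r ξ).le _))]
      exact ptw ξ
    refine ⟨hint, ?_⟩
    rw [barronNorm, barronNorm, ← integral_const_mul]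
    exact integral_mono hint (hF.intW.const_mul c) ptw
  have m0 := main γ⁻¹ 0 (by
    intro r hr
    rw [Real.rpow_zero, inv_mul_eq_div, le_div_iff₀ hγ]
    nlinarith)
  have m1 := main (1 / (2 * (Real.sqrt (1 + γ) - 1))) 1 (by
    intro r hr
    have hb : 0 < Real.sqrt (1 + γ) - 1 := by linarith
    rw [Real.rpow_one, one_div, inv_mul_eq_div, le_div_iff₀ (by positivity)]
    nlinarith [sq_nonneg (r - (Real.sqrt (1 + γ) - 1))])
  have m2 := main (1 + 1 / γ) 2 (by
    intro r hr
    have hrw : (1 + 1 / γ) = (γ + 1) / γ := by field_simp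
    rw [hrw, div_mul_eq_mul_div, le_div_iff₀ hγ,
      show (2:ℝ) = ((2:ℕ):ℝ) by norm_num, Real.rpow_natCast]
    nlinarith [sq_nonneg (γ - r)])
  rw [add_zero] at m0
  exact ⟨m0.1, m1.1, m2.1, m0.2, m1.2, m2.2⟩
end
end

section
/- Let s ≥ 0, let R ∈ ℝ^{m×m} be symmetric positive definite, let g : ℝ^d → ℝ^{d×m} have all entries in B^s(ℝ^d), and let V ∈ B^{s+1}(ℝ^d). Define u : ℝ^d → ℝ^m by u(x) := −(1/2) R^{−1} g(x)^T ∇V(x). Then every component of u belongs to B^s(ℝ^d) and ‖u‖_{B^s(ℝ^d)} ≤ C_{R,2} ‖g‖_{B^s(ℝ^d)} ‖V‖_{B^{s+1}(ℝ^d)}, where C_{R,2} := (1/2) Σ_{i=1}^m max_{1≤j≤m} |(R^{−1})_{ij}|. -/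
open MeasureTheory Complex Filter
open scoped Convolution

noncomputable section

namespace Aux

variable {d : ℕ} {s : ℝ}

lemma wt_pos (s : ℝ) (ξ : Ed d) : 0 < (1 + ‖ξ‖) ^ s :=
  Real.rpow_pos_of_pos (by positivity) s

lemma one_le_base (ξ : Ed d) : (1:ℝ) ≤ 1 + ‖ξ‖ := by
  have := norm_nonneg ξ; linarith

lemma wt_submul (hs : 0 ≤ s) (ξ η : Ed d) :
    (1 + ‖ξ‖) ^ s ≤ (1 + ‖η‖) ^ s * (1 + ‖ξ - η‖) ^ s := by
  rw [← Real.mul_rpow (by positivity) (by positivity)]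
  apply Real.rpow_le_rpow (by positivity) _ hs
  have h : ‖ξ‖ ≤ ‖η‖ + ‖ξ - η‖ := by
    have := norm_add_le η (ξ - η); simpa using this
  have h1 : 0 ≤ ‖η‖ := norm_nonneg _
  have h2 : 0 ≤ ‖ξ - η‖ := norm_nonneg _
  nlinarith

lemma cont_wt (s : ℝ) : Continuous fun ξ : Ed d => (1 + ‖ξ‖) ^ s :=
  Continuous.rpow_const (continuous_const.add continuous_norm) fun ξ => Or.inl (by positivity)

lemma norm_exp_I_mul (t : ℝ) : ‖Complex.exp (Complex.I * t)‖ = 1 := by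
  simp [Complex.norm_exp]

lemma cont_exp_inner (x : Ed d) :
    Continuous fun ξ : Ed d => Complex.exp (Complex.I * Complex.ofReal (inner ℝ x ξ)) :=
  Complex.continuous_exp.comp <| continuous_const.mul <|
    Complex.continuous_ofReal.comp (Continuous.inner continuous_const continuous_id)

lemma integrable_mul_exp {F : Ed d → ℂ} (hF : Integrable F) (x : Ed d) :
    Integrable fun ξ => F ξ * Complex.exp (Complex.I * Complex.ofReal (inner ℝ x ξ)) := by
  refine hF.bdd_mul (c := 1) ((cont_exp_inner x).aestronglyMeasurable) ?_ |>.congr ?_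
  · exact Eventually.of_forall fun ξ => le_of_eq (norm_exp_I_mul _)
  · exact Eventually.of_forall fun ξ => mul_comm _ _

lemma abs_coord_le (ξ : Ed d) (k : Fin d) : |ξ k| ≤ ‖ξ‖ := by
  have h := abs_real_inner_le_norm (EuclideanSpace.single k (1:ℝ)) ξ
  simpa [EuclideanSpace.inner_single_left, EuclideanSpace.norm_single] using h

lemma norm_le_wt (hs : 0 ≤ s) (ξ : Ed d) : ‖ξ‖ ≤ (1 + ‖ξ‖) ^ (s + 1) := by
  calc ‖ξ‖ ≤ 1 + ‖ξ‖ := by linarith [norm_nonneg ξ]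
  _ = (1 + ‖ξ‖) ^ (1:ℝ) := (Real.rpow_one _).symm
  _ ≤ (1 + ‖ξ‖) ^ (s + 1) := Real.rpow_le_rpow_of_exponent_le (one_le_base ξ) (by linarith)

lemma mul_wt_le (hs : 0 ≤ s) (ξ : Ed d) : ‖ξ‖ * (1 + ‖ξ‖) ^ s ≤ (1 + ‖ξ‖) ^ (s + 1) := by
  rw [Real.rpow_add (by positivity), Real.rpow_one, mul_comm ((1 + ‖ξ‖) ^ s)]
  exact mul_le_mul_of_nonneg_right (by linarith [norm_nonneg ξ]) (wt_pos s ξ).le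

/-- The derivative piece: `FVk k` represents `∂_k V`. -/
lemma barron_pd {V : Ed d → ℝ} {FV : Ed d → ℂ} (hs : 0 ≤ s)
    (hV : BarronRep d (s + 1) V FV) (k : Fin d) :
    BarronRep d s (pd d V k) (fun ξ => FV ξ * (Complex.I * ((ξ k : ℝ) : ℂ))) := by
  classical
  set M : Ed d → (Ed d →L[ℝ] ℂ) := fun ξ => Complex.ofRealCLM.comp (innerSL ℝ ξ) with hM
  have hMcont : Continuous M :=
    (ContinuousLinearMap.compL ℝ _ ℝ ℂ Complex.ofRealCLM).continuous.comp (innerSL ℝ).continuous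
  have hMnorm : ∀ ξ : Ed d, ‖M ξ‖ ≤ ‖ξ‖ := by
    intro ξ
    refine ContinuousLinearMap.opNorm_le_bound _ (norm_nonneg ξ) fun v => ?_
    have hval : (M ξ) v = ((inner ℝ ξ v : ℝ) : ℂ) := rfl
    rw [hval, Complex.norm_real, Real.norm_eq_abs]
    exact abs_real_inner_le_norm ξ v
  set F' : Ed d → Ed d → Ed d →L[ℝ] ℂ := fun x ξ =>
    FV ξ • (Complex.exp (Complex.I * Complex.ofReal (inner ℝ x ξ)) • (Complex.I • M ξ)) with hF'
  have hF'norm : ∀ x ξ, ‖F' x ξ‖ ≤ ‖FV ξ‖ * (1 + ‖ξ‖) ^ (s + 1) := by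
    intro x ξ
    have h1 : ‖F' x ξ‖ = ‖FV ξ‖ * (‖Complex.exp (Complex.I * Complex.ofReal (inner ℝ x ξ))‖ *
        (‖Complex.I‖ * ‖M ξ‖)) :=
      (norm_smul (FV ξ) (Complex.exp (Complex.I * Complex.ofReal (inner ℝ x ξ)) •
          (Complex.I • M ξ))).trans <|
        congrArg (fun t => ‖FV ξ‖ * t) <|
          (norm_smul (Complex.exp (Complex.I * Complex.ofReal (inner ℝ x ξ)))
            (Complex.I • M ξ)).trans <|
          congrArg (fun t => ‖Complex.exp (Complex.I * Complex.ofReal (inner ℝ x ξ))‖ * t)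
            (norm_smul Complex.I (M ξ))
    rw [h1, Aux.norm_exp_I_mul, Complex.norm_I]
    simp only [one_mul]
    calc ‖FV ξ‖ * ‖M ξ‖ ≤ ‖FV ξ‖ * ‖ξ‖ :=
          mul_le_mul_of_nonneg_left (hMnorm ξ) (norm_nonneg _)
    _ ≤ ‖FV ξ‖ * (1 + ‖ξ‖) ^ (s + 1) :=
          mul_le_mul_of_nonneg_left (Aux.norm_le_wt hs ξ) (norm_nonneg _)
  have hF'eq : ∀ x ξ : Ed d, F' x ξ =
      ((FV ξ * Complex.exp (Complex.I * Complex.ofReal (inner ℝ x ξ))) * Complex.I) • M ξ := by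
    intro x ξ
    rw [show F' x ξ = FV ξ • (Complex.exp (Complex.I * Complex.ofReal (inner ℝ x ξ)) •
      (Complex.I • M ξ)) from rfl, smul_smul, smul_smul]
  have hF'meas : ∀ x : Ed d, AEStronglyMeasurable (F' x) volume := by
    intro x
    refine AEStronglyMeasurable.congr ?_ (Eventually.of_forall fun ξ => (hF'eq x ξ).symm)
    exact (((hV.intF.aestronglyMeasurable.mul
      (Aux.cont_exp_inner x).aestronglyMeasurable)).mul_const Complex.I).smul
      hMcont.aestronglyMeasurable
  have hF'int : ∀ x : Ed d, Integrable (F' x) volume := by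
    intro x
    exact Integrable.mono' hV.intW (hF'meas x) (Eventually.of_forall fun ξ => hF'norm x ξ)
  have hdiff : ∀ (x ξ : Ed d),
      HasFDerivAt (fun y => FV ξ * Complex.exp (Complex.I * Complex.ofReal (inner ℝ y ξ)))
        (F' x ξ) x := by
    intro x ξ
    have h1 : HasFDerivAt (fun y : Ed d => (inner ℝ y ξ : ℝ)) (innerSL ℝ ξ) x := by
      have heq : (fun y : Ed d => (inner ℝ y ξ : ℝ)) = fun y => innerSL ℝ ξ y := by
        funext y; exact real_inner_comm ξ y
      rw [heq]; exact (innerSL ℝ ξ).hasFDerivAt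
    have h2 : HasFDerivAt (fun y : Ed d => ((inner ℝ y ξ : ℝ) : ℂ)) (M ξ) x :=
      Complex.ofRealCLM.hasFDerivAt.comp x h1
    have h3 := (h2.const_mul Complex.I).cexp.const_mul (FV ξ)
    simpa [hF', smul_smul, mul_comm, mul_left_comm, mul_assoc] using h3
  have key : ∀ x₀ : Ed d,
      HasFDerivAt (fun x => ∫ ξ, FV ξ * Complex.exp (Complex.I * Complex.ofReal (inner ℝ x ξ)))
        (∫ ξ, F' x₀ ξ) x₀ := by
    intro x₀
    refine hasFDerivAt_integral_of_dominated_of_fderiv_le (Metric.ball_mem_nhds x₀ one_pos)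
      (Eventually.of_forall fun x => (Aux.integrable_mul_exp hV.intF x).aestronglyMeasurable)
      (Aux.integrable_mul_exp hV.intF x₀) (hF'meas x₀)
      (Eventually.of_forall fun ξ => fun x _ => hF'norm x ξ) hV.intW
      (Eventually.of_forall fun ξ => fun x _ => hdiff x ξ)
  -- identify the function with (V · : ℂ)
  have hfun : (fun x => ∫ ξ, FV ξ * Complex.exp (Complex.I * Complex.ofReal (inner ℝ x ξ)))
      = fun x => ((V x : ℝ) : ℂ) := by
    funext x; exact (hV.repr x).symm
  have keyV : ∀ x₀ : Ed d, HasFDerivAt (fun x => ((V x : ℝ) : ℂ)) (∫ ξ, F' x₀ ξ) x₀ := by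
    intro x₀; have := key x₀; rwa [hfun] at this
  have hVdiff : ∀ x₀ : Ed d,
      HasFDerivAt V (Complex.reCLM.comp (∫ ξ, F' x₀ ξ)) x₀ := by
    intro x₀
    have := Complex.reCLM.hasFDerivAt.comp x₀ (keyV x₀)
    simpa [Function.comp_def] using this
  have hLeq : ∀ x₀ : Ed d, (∫ ξ, F' x₀ ξ) =
      Complex.ofRealCLM.comp (Complex.reCLM.comp (∫ ξ, F' x₀ ξ)) := by
    intro x₀
    have h2 : HasFDerivAt (fun x => ((V x : ℝ) : ℂ))
        (Complex.ofRealCLM.comp (Complex.reCLM.comp (∫ ξ, F' x₀ ξ))) x₀ := by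
      have := Complex.ofRealCLM.hasFDerivAt.comp x₀ (hVdiff x₀)
      simpa [Function.comp_def] using this
    exact (keyV x₀).unique h2
  -- value of pd
  have hpd : ∀ x₀ : Ed d, ((pd d V k x₀ : ℝ) : ℂ) =
      ∫ ξ, (F' x₀ ξ) (EuclideanSpace.single k 1) := by
    intro x₀
    have h1 : pd d V k x₀ =
        (Complex.reCLM.comp (∫ ξ, F' x₀ ξ)) (EuclideanSpace.single k 1) := by
      unfold pd; rw [(hVdiff x₀).fderiv]
    have h2 : ((pd d V k x₀ : ℝ) : ℂ) = (∫ ξ, F' x₀ ξ) (EuclideanSpace.single k 1) := by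
      rw [h1]
      conv_rhs => rw [hLeq x₀]
      simp
    rw [h2]
    exact ContinuousLinearMap.integral_apply (hF'int x₀) _
  have happ : ∀ x₀ ξ : Ed d, (F' x₀ ξ) (EuclideanSpace.single k 1)
      = (FV ξ * (Complex.I * ((ξ k : ℝ) : ℂ))) *
        Complex.exp (Complex.I * Complex.ofReal (inner ℝ x₀ ξ)) := by
    intro x₀ ξ
    have hval : (inner ℝ ξ (EuclideanSpace.single k (1:ℝ)) : ℝ) = ξ k := by
      simp [EuclideanSpace.inner_single_right]
    simp only [hF', ContinuousLinearMap.smul_apply, hM, ContinuousLinearMap.comp_apply]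
    rw [show ((innerSL ℝ ξ) (EuclideanSpace.single k 1) : ℝ) = ξ k from hval]
    simp [smul_eq_mul]
    ring
  -- integrability of FVk
  have hmeask : AEStronglyMeasurable (fun ξ : Ed d => FV ξ * (Complex.I * ((ξ k : ℝ) : ℂ))) volume := by
    refine hV.intF.aestronglyMeasurable.mul ?_
    exact (continuous_const.mul (Complex.continuous_ofReal.comp (PiLp.continuous_apply 2 _ k))).aestronglyMeasurable
  have hknorm : ∀ ξ : Ed d, ‖FV ξ * (Complex.I * ((ξ k : ℝ) : ℂ))‖ = ‖FV ξ‖ * |ξ k| := by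
    intro ξ; simp [Complex.norm_real]
  have hintFk : Integrable (fun ξ : Ed d => FV ξ * (Complex.I * ((ξ k : ℝ) : ℂ))) := by
    refine Integrable.mono' hV.intW hmeask (Eventually.of_forall fun ξ => ?_)
    rw [hknorm ξ]
    calc ‖FV ξ‖ * |ξ k| ≤ ‖FV ξ‖ * ‖ξ‖ :=
          mul_le_mul_of_nonneg_left (Aux.abs_coord_le ξ k) (norm_nonneg _)
    _ ≤ ‖FV ξ‖ * (1 + ‖ξ‖) ^ (s + 1) :=
          mul_le_mul_of_nonneg_left (Aux.norm_le_wt hs ξ) (norm_nonneg _)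
  have hintWk : Integrable (fun ξ : Ed d =>
      ‖FV ξ * (Complex.I * ((ξ k : ℝ) : ℂ))‖ * (1 + ‖ξ‖) ^ s) := by
    refine Integrable.mono' hV.intW
      (hintFk.aestronglyMeasurable.norm.mul (Aux.cont_wt s).aestronglyMeasurable)
      (Eventually.of_forall fun ξ => ?_)
    rw [Real.norm_of_nonneg (by positivity), hknorm ξ]
    calc ‖FV ξ‖ * |ξ k| * (1 + ‖ξ‖) ^ s ≤ ‖FV ξ‖ * ‖ξ‖ * (1 + ‖ξ‖) ^ s := by
            exact mul_le_mul_of_nonneg_right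
              (mul_le_mul_of_nonneg_left (Aux.abs_coord_le ξ k) (norm_nonneg _))
              (Aux.wt_pos s ξ).le
      _ = ‖FV ξ‖ * (‖ξ‖ * (1 + ‖ξ‖) ^ s) := by ring
      _ ≤ ‖FV ξ‖ * (1 + ‖ξ‖) ^ (s + 1) :=
            mul_le_mul_of_nonneg_left (Aux.mul_wt_le hs ξ) (norm_nonneg _)
  refine ⟨hintFk, hintWk, fun x₀ => ?_⟩
  rw [hpd x₀]
  refine integral_congr_ae (Eventually.of_forall fun ξ => ?_)
  exact happ x₀ ξ


lemma barronNorm_pd_le {V : Ed d → ℝ} {FV : Ed d → ℂ} (hs : 0 ≤ s)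
    (hV : BarronRep d (s + 1) V FV) (k : Fin d) :
    barronNorm d s (fun ξ => FV ξ * (Complex.I * ((ξ k : ℝ) : ℂ))) ≤
      barronNorm d (s + 1) FV := by
  refine integral_mono (barron_pd hs hV k).intW hV.intW fun ξ => ?_
  dsimp only
  have hknorm : ‖FV ξ * (Complex.I * ((ξ k : ℝ) : ℂ))‖ = ‖FV ξ‖ * |ξ k| := by
    simp [Complex.norm_real]
  rw [hknorm]
  calc ‖FV ξ‖ * |ξ k| * (1 + ‖ξ‖) ^ s ≤ ‖FV ξ‖ * ‖ξ‖ * (1 + ‖ξ‖) ^ s := by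
        exact mul_le_mul_of_nonneg_right
          (mul_le_mul_of_nonneg_left (Aux.abs_coord_le ξ k) (norm_nonneg _))
          (Aux.wt_pos s ξ).le
  _ = ‖FV ξ‖ * (‖ξ‖ * (1 + ‖ξ‖) ^ s) := by ring
  _ ≤ ‖FV ξ‖ * (1 + ‖ξ‖) ^ (s + 1) :=
        mul_le_mul_of_nonneg_left (Aux.mul_wt_le hs ξ) (norm_nonneg _)

set_option maxHeartbeats 1000000 in
/-- Product of Barron functions: represented by the convolution of the representatives. -/
lemma barron_conv (hs : 0 ≤ s) {f h : Ed d → ℝ} {F H : Ed d → ℂ}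
    (hf : BarronRep d s f F) (hh : BarronRep d s h H) :
    BarronRep d s (fun x => f x * h x) (F ⋆[ContinuousLinearMap.mul ℝ ℂ] H) ∧
      barronNorm d s (F ⋆[ContinuousLinearMap.mul ℝ ℂ] H) ≤
        barronNorm d s F * barronNorm d s H := by
  classical
  set Lc := ContinuousLinearMap.mul ℝ ℂ with hLc
  set Lr := ContinuousLinearMap.mul ℝ ℝ with hLr
  set A : Ed d → ℝ := fun η => ‖F η‖ * (1 + ‖η‖) ^ s with hA
  set B : Ed d → ℝ := fun η => ‖H η‖ * (1 + ‖η‖) ^ s with hB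
  have intA : Integrable A := hf.intW
  have intB : Integrable B := hh.intW
  have hC : Integrable (F ⋆[Lc] H) := hf.intF.integrable_convolution Lc hh.intF
  have hD : Integrable (A ⋆[Lr] B) := intA.integrable_convolution Lr intB
  have hDint : ∫ ξ, (A ⋆[Lr] B) ξ = barronNorm d s F * barronNorm d s H := by
    have := integral_convolution Lr intA intB
    rw [this]; rfl
  have hex1 := hf.intF.ae_convolution_exists Lc hh.intF
  have hex2 := intA.ae_convolution_exists Lr intB
  have hbound : ∀ᵐ ξ, ‖(F ⋆[Lc] H) ξ‖ * (1 + ‖ξ‖) ^ s ≤ (A ⋆[Lr] B) ξ := by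
    filter_upwards [hex1, hex2] with ξ h1 h2
    have i1 : Integrable fun η => ‖F η‖ * ‖H (ξ - η)‖ := by
      refine h1.integrable.norm.congr (Eventually.of_forall fun η => ?_)
      simp [hLc, norm_mul]
    have i2 : Integrable fun η => A η * B (ξ - η) := by
      refine h2.integrable.congr (Eventually.of_forall fun η => ?_)
      simp [hLr]
    have e1 : ‖(F ⋆[Lc] H) ξ‖ ≤ ∫ η, ‖F η‖ * ‖H (ξ - η)‖ := by
      rw [convolution_def]
      refine (norm_integral_le_integral_norm _).trans (le_of_eq ?_)
      refine integral_congr_ae (Eventually.of_forall fun η => ?_)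
      simp [hLc, norm_mul]
    calc ‖(F ⋆[Lc] H) ξ‖ * (1 + ‖ξ‖) ^ s
        ≤ (∫ η, ‖F η‖ * ‖H (ξ - η)‖) * (1 + ‖ξ‖) ^ s :=
          mul_le_mul_of_nonneg_right e1 (Aux.wt_pos s ξ).le
    _ = ∫ η, ‖F η‖ * ‖H (ξ - η)‖ * (1 + ‖ξ‖) ^ s := (integral_mul_const _ _).symm
    _ ≤ ∫ η, A η * B (ξ - η) := by
          refine integral_mono (i1.mul_const _) i2 fun η => ?_
          show ‖F η‖ * ‖H (ξ - η)‖ * (1 + ‖ξ‖) ^ s ≤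
            (‖F η‖ * (1 + ‖η‖) ^ s) * (‖H (ξ - η)‖ * (1 + ‖ξ - η‖) ^ s)
          have hw := Aux.wt_submul hs ξ η
          have h1' : (0:ℝ) ≤ ‖F η‖ := norm_nonneg _
          have h2' : (0:ℝ) ≤ ‖H (ξ - η)‖ := norm_nonneg _
          have h3' : (0:ℝ) ≤ (1 + ‖η‖) ^ s := (Aux.wt_pos s η).le
          have h4' : (0:ℝ) ≤ (1 + ‖ξ - η‖) ^ s := (Aux.wt_pos s (ξ - η)).le
          nlinarith [mul_le_mul_of_nonneg_left hw (mul_nonneg h1' h2')]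
    _ = (A ⋆[Lr] B) ξ := by
          rw [convolution_def]
          refine integral_congr_ae (Eventually.of_forall fun η => ?_)
          simp [hLr]
  have intWC : Integrable (fun ξ => ‖(F ⋆[Lc] H) ξ‖ * (1 + ‖ξ‖) ^ s) := by
    refine Integrable.mono' hD
      (hC.aestronglyMeasurable.norm.mul (Aux.cont_wt s).aestronglyMeasurable) ?_
    filter_upwards [hbound] with ξ hb
    rwa [Real.norm_of_nonneg (by positivity)]
  have hnormle : barronNorm d s (F ⋆[Lc] H) ≤ barronNorm d s F * barronNorm d s H := by
    rw [← hDint]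
    exact integral_mono_ae intWC hD hbound
  refine ⟨⟨hC, intWC, fun x => ?_⟩, hnormle⟩
  set e : Ed d → ℂ := fun η => Complex.exp (Complex.I * Complex.ofReal (inner ℝ x η)) with he
  have intF' : Integrable fun η => F η * e η := Aux.integrable_mul_exp hf.intF x
  have intH' : Integrable fun η => H η * e η := Aux.integrable_mul_exp hh.intF x
  have claim : ∀ ξ, (F ⋆[Lc] H) ξ * e ξ =
      ((fun η => F η * e η) ⋆[Lc] fun η => H η * e η) ξ := by
    intro ξ
    rw [convolution_def, convolution_def, ← integral_mul_const]
    refine integral_congr_ae (Eventually.of_forall fun η => ?_)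
    have hee : e η * e (ξ - η) = e ξ := by
      rw [he]
      dsimp only
      rw [← Complex.exp_add]
      congr 1
      have : (inner ℝ x (ξ - η) : ℝ) = (inner ℝ x ξ : ℝ) - (inner ℝ x η : ℝ) := inner_sub_right x ξ η
      rw [this]
      push_cast
      ring
    simp only [hLc, ContinuousLinearMap.mul_apply']
    rw [← hee]
    ring
  calc ((f x * h x : ℝ) : ℂ) = (f x : ℂ) * (h x : ℂ) := by push_cast; ring
  _ = (∫ η, F η * e η) * ∫ η, H η * e η := by rw [hf.repr x, hh.repr x]
  _ = ∫ ξ, ((fun η => F η * e η) ⋆[Lc] fun η => H η * e η) ξ := by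
        rw [integral_convolution Lc intF' intH']
        simp [hLc]
  _ = ∫ ξ, (F ⋆[Lc] H) ξ * e ξ := by
        refine integral_congr_ae (Eventually.of_forall fun ξ => (claim ξ).symm)
  _ = ∫ ξ, (F ⋆[Lc] H) ξ * Complex.exp (Complex.I * Complex.ofReal (inner ℝ x ξ)) := rfl


lemma barronNorm_nonneg (d : ℕ) (s : ℝ) (F : Ed d → ℂ) : 0 ≤ barronNorm d s F :=
  integral_nonneg fun ξ => by positivity

lemma barron_const_mul (c : ℝ) {f : Ed d → ℝ} {F : Ed d → ℂ} (hf : BarronRep d s f F) :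
    BarronRep d s (fun x => c * f x) (fun ξ => (c : ℂ) * F ξ) := by
  refine ⟨hf.intF.const_mul _, ?_, fun x => ?_⟩
  · refine (hf.intW.const_mul |c|).congr (Eventually.of_forall fun ξ => ?_)
    dsimp only
    rw [norm_mul, Complex.norm_real, Real.norm_eq_abs]
    ring
  · push_cast
    rw [hf.repr x, ← integral_const_mul]
    refine integral_congr_ae (Eventually.of_forall fun ξ => ?_)
    ring

lemma barron_sum {ι : Type*} (t : Finset ι) {f : ι → Ed d → ℝ} {F : ι → Ed d → ℂ}
    (hf : ∀ i ∈ t, BarronRep d s (f i) (F i)) :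
    BarronRep d s (fun x => ∑ i ∈ t, f i x) (fun ξ => ∑ i ∈ t, F i ξ) := by
  refine ⟨integrable_finset_sum t fun i hi => (hf i hi).intF, ?_, fun x => ?_⟩
  · refine Integrable.mono' (integrable_finset_sum t fun i hi => (hf i hi).intW)
      (((integrable_finset_sum t fun i hi =>
        (hf i hi).intF).aestronglyMeasurable.norm.mul (Aux.cont_wt s).aestronglyMeasurable))
      (Eventually.of_forall fun ξ => ?_)
    rw [Real.norm_of_nonneg (by positivity)]
    calc ‖∑ i ∈ t, F i ξ‖ * (1 + ‖ξ‖) ^ s ≤ (∑ i ∈ t, ‖F i ξ‖) * (1 + ‖ξ‖) ^ s :=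
          mul_le_mul_of_nonneg_right (norm_sum_le t _) (Aux.wt_pos s ξ).le
    _ = ∑ i ∈ t, ‖F i ξ‖ * (1 + ‖ξ‖) ^ s := Finset.sum_mul _ _ _
  · push_cast
    have h1 : ∀ i ∈ t, (f i x : ℂ) =
        ∫ ξ, F i ξ * Complex.exp (Complex.I * Complex.ofReal (inner ℝ x ξ)) :=
      fun i hi => (hf i hi).repr x
    rw [Finset.sum_congr rfl h1,
      ← integral_finset_sum t fun i hi => Aux.integrable_mul_exp (hf i hi).intF x]
    refine integral_congr_ae (Eventually.of_forall fun ξ => ?_)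
    dsimp only
    rw [← Finset.sum_mul]

end Aux

/-- for `s ≥ 0`, a symmetric positive definite `R ∈ ℝ^{m×m}`, a matrix field `g`
with entries in `B^s(ℝ^d)` and `V ∈ B^{s+1}(ℝ^d)`, the feedback control
`u = -(1/2) R⁻¹ gᵀ ∇V` has components in `B^s(ℝ^d)` and
`‖u‖_{B^s} ≤ C_{R,2} ‖g‖_{B^s} ‖V‖_{B^{s+1}}` with `C_{R,2} = (1/2) Σᵢ maxⱼ |(R⁻¹)ᵢⱼ|`. -/
theorem feedback_control_barron (d m : ℕ) (hm : 0 < m) (s : ℝ) (hs : 0 ≤ s)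
    (R : Matrix (Fin m) (Fin m) ℝ) (hR : R.PosDef)
    (g : Fin d → Fin m → Ed d → ℝ) (G : Fin d → Fin m → Ed d → ℂ)
    (hg : ∀ k j, BarronRep d s (g k j) (G k j))
    (V : Ed d → ℝ) (FV : Ed d → ℂ) (hV : BarronRep d (s + 1) V FV) :
    ∃ U : Fin m → Ed d → ℂ,
      (∀ i, BarronRep d s
        (fun x => -(1 / 2) * ∑ j, R⁻¹ i j * ∑ k, g k j x * pd d V k x) (U i)) ∧
      (∑ i, barronNorm d s (U i)) ≤
        ((1 / 2) * ∑ i : Fin m, ⨆ j, |R⁻¹ i j|) * (∑ k, ∑ j, barronNorm d s (G k j))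
          * barronNorm d (s + 1) FV := by

  classical
  haveI : Nonempty (Fin m) := ⟨⟨0, hm⟩⟩
  set M : ℝ := barronNorm d (s + 1) FV with hMdef
  set N : Fin d → Fin m → ℝ := fun k j => barronNorm d s (G k j) with hNdef
  set P : Fin d → Fin m → Ed d → ℂ :=
    fun k j => (G k j) ⋆[ContinuousLinearMap.mul ℝ ℂ] (fun ξ => FV ξ * (Complex.I * ((ξ k : ℝ) : ℂ))) with hPdef
  have hP : ∀ k j, BarronRep d s (fun x => g k j x * pd d V k x) (P k j) :=
    fun k j => (Aux.barron_conv hs (hg k j) (Aux.barron_pd hs hV k)).1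
  have hPnorm : ∀ k j, barronNorm d s (P k j) ≤ N k j * M := by
    intro k j
    refine le_trans (Aux.barron_conv hs (hg k j) (Aux.barron_pd hs hV k)).2 ?_
    exact mul_le_mul_of_nonneg_left (Aux.barronNorm_pd_le hs hV k)
      (Aux.barronNorm_nonneg d s (G k j))
  set U : Fin m → Ed d → ℂ := fun i ξ =>
    ((-(1 / 2) : ℝ) : ℂ) * ∑ j, ((R⁻¹ i j : ℝ) : ℂ) * ∑ k, P k j ξ with hUdef
  have hrep : ∀ i, BarronRep d s
      (fun x => -(1 / 2) * ∑ j, R⁻¹ i j * ∑ k, g k j x * pd d V k x) (U i) := by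
    intro i
    exact Aux.barron_const_mul (-(1 / 2))
      (Aux.barron_sum Finset.univ fun j _ =>
        Aux.barron_const_mul (R⁻¹ i j) (Aux.barron_sum Finset.univ fun k _ => hP k j))
  refine ⟨U, hrep, ?_⟩
  -- pointwise bound on ‖U i ξ‖
  have hq : ∀ k j, Integrable (fun ξ => ‖P k j ξ‖ * (1 + ‖ξ‖) ^ s) := fun k j => (hP k j).intW
  have hUbd : ∀ i, barronNorm d s (U i) ≤ (1 / 2) * ∑ j, |R⁻¹ i j| * ∑ k, barronNorm d s (P k j) := by
    intro i
    have hbint : Integrable (fun ξ =>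
        (1 / 2) * ∑ j, |R⁻¹ i j| * ∑ k, ‖P k j ξ‖ * (1 + ‖ξ‖) ^ s) := by
      exact ((integrable_finset_sum _ fun j _ =>
        (integrable_finset_sum _ fun k _ => hq k j).const_mul _).const_mul _)
    have hmono : barronNorm d s (U i) ≤
        ∫ ξ, (1 / 2) * ∑ j, |R⁻¹ i j| * ∑ k, ‖P k j ξ‖ * (1 + ‖ξ‖) ^ s := by
      refine integral_mono (hrep i).intW hbint fun ξ => ?_
      have h1 : ‖U i ξ‖ ≤ (1 / 2) * ∑ j, |R⁻¹ i j| * ∑ k, ‖P k j ξ‖ := by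
        calc ‖U i ξ‖ = (1 / 2) * ‖∑ j, ((R⁻¹ i j : ℝ) : ℂ) * ∑ k, P k j ξ‖ := by
              rw [show U i ξ = ((-(1 / 2) : ℝ) : ℂ) * ∑ j, ((R⁻¹ i j : ℝ) : ℂ) * ∑ k, P k j ξ from rfl,
                norm_mul, Complex.norm_real]
              norm_num
        _ ≤ (1 / 2) * ∑ j, ‖((R⁻¹ i j : ℝ) : ℂ) * ∑ k, P k j ξ‖ :=
              mul_le_mul_of_nonneg_left (norm_sum_le _ _) (by norm_num)
        _ ≤ (1 / 2) * ∑ j, |R⁻¹ i j| * ∑ k, ‖P k j ξ‖ := by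
              refine mul_le_mul_of_nonneg_left (Finset.sum_le_sum fun j _ => ?_) (by norm_num)
              rw [norm_mul, Complex.norm_real, Real.norm_eq_abs]
              exact mul_le_mul_of_nonneg_left (norm_sum_le _ _) (abs_nonneg _)
      calc ‖U i ξ‖ * (1 + ‖ξ‖) ^ s
          ≤ ((1 / 2) * ∑ j, |R⁻¹ i j| * ∑ k, ‖P k j ξ‖) * (1 + ‖ξ‖) ^ s :=
            mul_le_mul_of_nonneg_right h1 (Aux.wt_pos s ξ).le
      _ = (1 / 2) * ∑ j, |R⁻¹ i j| * ∑ k, ‖P k j ξ‖ * (1 + ‖ξ‖) ^ s := by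
            rw [mul_assoc, Finset.sum_mul]
            congr 1
            refine Finset.sum_congr rfl fun j _ => ?_
            rw [mul_assoc, Finset.sum_mul]
    refine hmono.trans (le_of_eq ?_)
    rw [integral_const_mul]
    congr 1
    rw [integral_finset_sum _ fun j _ => (integrable_finset_sum _ fun k _ => hq k j).const_mul _]
    refine Finset.sum_congr rfl fun j _ => ?_
    rw [integral_const_mul, integral_finset_sum _ fun k _ => hq k j]
    rfl
  -- assemble
  set S : Fin m → ℝ := fun i => ⨆ j, |R⁻¹ i j| with hSdef
  have hSle : ∀ i j, |R⁻¹ i j| ≤ S i := by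
    intro i j
    show |R⁻¹ i j| ≤ ⨆ j', |R⁻¹ i j'|
    exact le_ciSup (f := fun j' => |R⁻¹ i j'|) (Set.Finite.bddAbove (Set.finite_range _)) j
  have hSnonneg : ∀ i, 0 ≤ S i := fun i => le_trans (abs_nonneg _) (hSle i (Classical.arbitrary _))
  set T : ℝ := ∑ k, ∑ j, N k j with hTdef
  have hTM : ∀ i, (1 / 2) * ∑ j, |R⁻¹ i j| * ∑ k, barronNorm d s (P k j)
      ≤ (1 / 2) * (S i * (T * M)) := by
    intro i
    refine mul_le_mul_of_nonneg_left ?_ (by norm_num)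
    have h2 : ∀ j, ∑ k, barronNorm d s (P k j) ≤ ∑ k, N k j * M :=
      fun j => Finset.sum_le_sum fun k _ => hPnorm k j
    calc ∑ j, |R⁻¹ i j| * ∑ k, barronNorm d s (P k j)
        ≤ ∑ j, S i * ∑ k, N k j * M := by
          refine Finset.sum_le_sum fun j _ => ?_
          refine mul_le_mul (hSle i j) (h2 j) ?_ (hSnonneg i)
          exact Finset.sum_nonneg fun k _ => Aux.barronNorm_nonneg d s (P k j)
    _ = S i * (T * M) := by
          rw [← Finset.mul_sum]
          congr 1
          rw [hTdef, Finset.sum_comm, Finset.sum_mul]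
          refine Finset.sum_congr rfl fun j _ => ?_
          rw [Finset.sum_mul]
  calc ∑ i, barronNorm d s (U i) ≤ ∑ i, (1 / 2) * (S i * (T * M)) :=
        Finset.sum_le_sum fun i _ => (hUbd i).trans (hTM i)
  _ = ((1 / 2) * ∑ i, S i) * T * M := by
        rw [← Finset.mul_sum, ← Finset.sum_mul]
        ring
end
end

section
/- Let s ≥ 1, γ > 0, and let μ : ℝ^d → ℝ^d have all components in B^{s−1}(ℝ^d). If v ∈ B^s(ℝ^d) satisfies γv − Δv + μ·∇v = 0 on ℝ^d — equivalently, (γ + |ξ|²) v̂(ξ) + (μ·∇v)^(ξ) = 0 for a.e. ξ ∈ ℝ^d — then v is identically zero. -/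
open MeasureTheory Complex Filter

noncomputable section

/-- Fourier transform of `μ·∇v`, expressed via representatives: the convolution
`Σᵢ μ̂ᵢ ⋆ (iξᵢ v̂)`. -/
def muGradHat (d : ℕ) (M : Fin d → Ed d → ℂ) (Fv : Ed d → ℂ) (ξ : Ed d) : ℂ :=
  ∑ i : Fin d, ∫ η, M i (ξ - η) * (Complex.I * (η i : ℂ) * Fv η)

/-! ### Auxiliary material for the proof of `injective_resolvent` -/

section InjResAux

open Metric Topology FourierTransform

/-- Second-derivative test: at an interior local maximum the second derivative is nonpositive. -/
lemma injRes_secondDerivTest {g g' : ℝ → ℝ} {q : ℝ} (hg : ∀ t, HasDerivAt g (g' t) t)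
    (hq : HasDerivAt g' q 0) (hmax : IsLocalMax g 0) : q ≤ 0 := by
  by_contra hqpos
  push_neg at hqpos
  have h0 : g' 0 = 0 := hmax.hasDerivAt_eq_zero (hg 0)
  have hslope := hasDerivAt_iff_tendsto_slope.mp hq
  have hslope' : Tendsto (slope g' 0) (𝓝[>] (0:ℝ)) (𝓝 q) :=
    hslope.mono_left (nhdsWithin_mono _ (fun t ht => ne_of_gt ht))
  have hev : ∀ᶠ t in 𝓝[>] (0:ℝ), 0 < slope g' 0 t := hslope'.eventually_const_lt hqpos
  have hev2 : ∀ᶠ t in 𝓝[>] (0:ℝ), g t ≤ g 0 := nhdsWithin_le_nhds hmax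
  obtain ⟨u, hu, husub⟩ := mem_nhdsGT_iff_exists_Ioo_subset.mp (hev.and hev2)
  have hu0 : (0:ℝ) < u := hu
  have hmono : StrictMonoOn g (Set.Ico (0:ℝ) u) := by
    apply strictMonoOn_of_deriv_pos (convex_Ico _ _)
    · exact fun t _ => (hg t).differentiableAt.continuousAt.continuousWithinAt
    · intro t ht
      rw [interior_Ico] at ht
      have h1 := (husub ht).1
      rw [slope_def_field, h0] at h1
      rw [(hg t).deriv]
      have ht0 : 0 < t := ht.1
      have h2 := mul_pos h1 ht0
      calc (0:ℝ) < (g' t - 0) / (t - 0) * t := h2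
        _ = g' t := by rw [sub_zero, sub_zero, div_mul_cancel₀ _ ht0.ne']
  have h1 : g 0 < g (u/2) := hmono ⟨le_refl 0, hu0⟩ ⟨by linarith, by linarith⟩ (by linarith)
  have h2 : g (u/2) ≤ g 0 := (husub ⟨by linarith, by linarith⟩).2
  linarith

variable {d : ℕ}

/-- The Fourier kernel `e^{i⟨x,ξ⟩}`. -/
def injRes_eK (x ξ : Ed d) : ℂ := Complex.exp (Complex.I * ((inner ℝ x ξ : ℝ) : ℂ))

lemma injRes_norm_eK (x ξ : Ed d) : ‖injRes_eK x ξ‖ = 1 := by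
  simp [injRes_eK, Complex.norm_exp]

lemma injRes_cont_eK_right (x : Ed d) : Continuous fun ξ : Ed d => injRes_eK x ξ :=
  Complex.continuous_exp.comp (continuous_const.mul
    (Complex.continuous_ofReal.comp (continuous_const.inner continuous_id)))

lemma injRes_cont_eK_left (ξ : Ed d) : Continuous fun x : Ed d => injRes_eK x ξ :=
  Complex.continuous_exp.comp (continuous_const.mul
    (Complex.continuous_ofReal.comp (continuous_id.inner continuous_const)))

lemma injRes_integrable_mul_eK {f : Ed d → ℂ} (hf : Integrable f) (x : Ed d) :
    Integrable fun ξ => f ξ * injRes_eK x ξ := by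
  refine hf.norm.mono' (hf.aestronglyMeasurable.mul
    (injRes_cont_eK_right x).aestronglyMeasurable) ?_
  filter_upwards with ξ
  rw [norm_mul, injRes_norm_eK, mul_one]

lemma injRes_eK_add (x ζ η : Ed d) : injRes_eK x (ζ + η) = injRes_eK x ζ * injRes_eK x η := by
  simp [injRes_eK, inner_add_right, Complex.ofReal_add, mul_add, Complex.exp_add]

lemma injRes_abs_coord (ξ : Ed d) (i : Fin d) : |ξ i| ≤ ‖ξ‖ := by
  have h := norm_inner_le_norm (𝕜 := ℝ) (EuclideanSpace.single i (1:ℝ)) ξ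
  simpa [EuclideanSpace.inner_single_left] using h

lemma injRes_norm_sq (ξ : Ed d) : ‖ξ‖ ^ 2 = ∑ i, (ξ i) ^ 2 := by
  rw [EuclideanSpace.norm_eq, Real.sq_sqrt (by positivity)]
  simp [sq_abs]

set_option maxHeartbeats 2000000 in
/-- Main auxiliary result: under the hypotheses of `injective_resolvent`, `v ≤ 0` everywhere. -/
theorem injRes_nonpos (d : ℕ) (s γ : ℝ) (hs : 1 ≤ s) (hγ : 0 < γ)
    (μ : Fin d → Ed d → ℝ) (M : Fin d → Ed d → ℂ)
    (hμ : ∀ i, BarronRep d (s - 1) (μ i) (M i))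
    (v : Ed d → ℝ) (Fv : Ed d → ℂ) (hv : BarronRep d s v Fv)
    (heq : ∀ᵐ ξ : Ed d, ((γ + ‖ξ‖ ^ 2 : ℝ) : ℂ) * Fv ξ + muGradHat d M Fv ξ = 0) :
    ∀ x, v x ≤ 0 := by
  classical
  by_contra hcon
  push_neg at hcon
  obtain ⟨xs, hxs⟩ := hcon
  -- basic measurability / integrability facts
  have mFv := hv.intF.aestronglyMeasurable
  have hcoord : ∀ i : Fin d, Continuous fun ξ : Ed d => ξ i := fun i =>
    (EuclideanSpace.proj i : Ed d →L[ℝ] ℝ).continuous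
  have int1 : Integrable fun ξ : Ed d => (1 + ‖ξ‖) * ‖Fv ξ‖ := by
    refine hv.intW.mono' ((continuous_const.add continuous_norm).aestronglyMeasurable.mul
      mFv.norm) ?_
    filter_upwards with ξ
    have h2 : (1 + ‖ξ‖) ≤ (1 + ‖ξ‖) ^ s := by
      nth_rewrite 1 [← Real.rpow_one (1 + ‖ξ‖)]
      exact Real.rpow_le_rpow_of_exponent_le (by simp) hs
    rw [Real.norm_of_nonneg (by positivity)]
    calc (1 + ‖ξ‖) * ‖Fv ξ‖ ≤ (1 + ‖ξ‖) ^ s * ‖Fv ξ‖ :=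
          mul_le_mul_of_nonneg_right h2 (norm_nonneg _)
      _ = ‖Fv ξ‖ * (1 + ‖ξ‖) ^ s := mul_comm _ _
  set G : Fin d → Ed d → ℂ := fun i η => Complex.I * ((η i : ℝ) : ℂ) * Fv η with hGdef
  have intG : ∀ i, Integrable (G i) := by
    intro i
    refine int1.mono' (((continuous_const.mul
      (Complex.continuous_ofReal.comp (hcoord i))).aestronglyMeasurable).mul mFv) ?_
    filter_upwards with η
    have h1 : |η i| ≤ ‖η‖ := injRes_abs_coord η i
    have h2 : ‖G i η‖ = |η i| * ‖Fv η‖ := by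
      simp [hGdef, Real.norm_eq_abs]
    rw [h2]
    have : |η i| ≤ 1 + ‖η‖ := by
      have := norm_nonneg η; linarith
    exact mul_le_mul_of_nonneg_right this (norm_nonneg _)
  have hΦ : ∀ i, Integrable (Function.uncurry fun ξ η : Ed d => G i η * M i (ξ - η))
      (volume.prod volume) := by
    intro i
    have := (intG i).convolution_integrand (L := ContinuousLinearMap.mul ℝ ℂ) (hμ i).intF
    exact this
  set c : Fin d → Ed d → ℂ := fun i ξ => ∫ η, G i η * M i (ξ - η) with hcdef
  have intc : ∀ i, Integrable (c i) := fun i => (hΦ i).integral_prod_left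
  have hmu_eq : ∀ ξ, muGradHat d M Fv ξ = ∑ i, c i ξ := by
    intro ξ
    unfold muGradHat
    refine Finset.sum_congr rfl fun i _ => ?_
    rw [show (fun η => M i (ξ - η) * (Complex.I * ((η i : ℝ) : ℂ) * Fv η))
      = fun η => G i η * M i (ξ - η) from funext fun η => by simp [hGdef]; ring]
  have intMu : Integrable (muGradHat d M Fv) := by
    have h : muGradHat d M Fv = fun ξ => ∑ i, c i ξ := funext hmu_eq
    rw [h]
    exact integrable_finset_sum _ fun i _ => intc i
  have intQ : Integrable fun ξ : Ed d => ((γ + ‖ξ‖ ^ 2 : ℝ) : ℂ) * Fv ξ := by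
    refine intMu.neg.congr ?_
    filter_upwards [heq] with ξ h
    exact neg_eq_of_add_eq_zero_left h
  have intN : Integrable fun ξ : Ed d => ((‖ξ‖ ^ 2 : ℝ) : ℂ) * Fv ξ := by
    have he : (fun ξ : Ed d => ((‖ξ‖ ^ 2 : ℝ) : ℂ) * Fv ξ)
        = fun ξ => ((γ + ‖ξ‖ ^ 2 : ℝ) : ℂ) * Fv ξ - (γ : ℂ) * Fv ξ := by
      funext ξ; push_cast; ring
    rw [he]
    exact intQ.sub (hv.intF.const_mul _)
  have intNnorm : Integrable fun ξ : Ed d => ‖ξ‖ ^ 2 * ‖Fv ξ‖ := by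
    refine intN.norm.congr ?_
    filter_upwards with ξ
    simp [Real.norm_eq_abs, _root_.abs_of_nonneg (sq_nonneg (‖ξ‖))]
  -- continuity of v
  set Vc : Ed d → ℂ := fun x => ∫ ξ, Fv ξ * injRes_eK x ξ with hVcdef
  have hVeq : ∀ x, (v x : ℂ) = Vc x := fun x => hv.repr x
  have hVcont : Continuous Vc := by
    refine continuous_of_dominated
      (fun x => mFv.mul (injRes_cont_eK_right x).aestronglyMeasurable) (fun x => ?_)
      hv.intF.norm ?_
    · filter_upwards with ξ
      rw [norm_mul, injRes_norm_eK, mul_one]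
    · filter_upwards with ξ
      exact continuous_const.mul (injRes_cont_eK_left ξ)
  have hvre : v = fun x => (Vc x).re := by
    funext x; rw [← hVeq x]; exact (Complex.ofReal_re _).symm
  have hvC : Continuous v := by
    rw [hvre]; exact Complex.continuous_re.comp hVcont
  -- decay of v at infinity (Riemann-Lebesgue)
  have hdecayC : Tendsto Vc (cocompact (Ed d)) (𝓝 0) := by
    have hRL := tendsto_integral_exp_inner_smul_cocompact Fv
    have hc0 : (-(2 * Real.pi)⁻¹ : ℝ) ≠ 0 := by
      simp [Real.pi_ne_zero]
    have hhom : Tendsto (fun x : Ed d => (-(2 * Real.pi)⁻¹ : ℝ) • x)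
        (cocompact (Ed d)) (cocompact (Ed d)) :=
      (Homeomorph.smulOfNeZero _ hc0).toCocompactMap.cocompact_tendsto'
    have hcomp := hRL.comp hhom
    have hfun : ((fun w : Ed d => ∫ ξ, 𝐞 (-(inner ℝ ξ w : ℝ)) • Fv ξ) ∘
        fun x : Ed d => (-(2 * Real.pi)⁻¹ : ℝ) • x) = Vc := by
      funext x
      show (∫ ξ, 𝐞 (-(inner ℝ ξ ((-(2 * Real.pi)⁻¹ : ℝ) • x) : ℝ)) • Fv ξ) = Vc x
      rw [hVcdef]
      refine integral_congr_ae (Eventually.of_forall fun ξ => ?_)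
      show 𝐞 (-(inner ℝ ξ ((-(2 * Real.pi)⁻¹ : ℝ) • x) : ℝ)) • Fv ξ = Fv ξ * injRes_eK x ξ
      have hinsm : (inner ℝ ξ ((-(2 * Real.pi)⁻¹ : ℝ) • x) : ℝ)
          = (-(2 * Real.pi)⁻¹ : ℝ) * (inner ℝ ξ x : ℝ) := real_inner_smul_right ξ x _
      rw [hinsm, Circle.smul_def, Real.fourierChar_apply, injRes_eK]
      rw [show (inner ℝ x ξ : ℝ) = (inner ℝ ξ x : ℝ) from real_inner_comm ξ x]
      rw [show (2 * Real.pi * -(-(2 * Real.pi)⁻¹ * (inner ℝ ξ x : ℝ)) : ℝ)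
        = (inner ℝ ξ x : ℝ) from by field_simp]
      rw [smul_eq_mul]
      ring
    rw [← hfun]
    exact hcomp
  have hdecay : Tendsto v (cocompact (Ed d)) (𝓝 0) := by
    rw [hvre]
    have := (Complex.continuous_re.tendsto 0).comp hdecayC
    exact this
  -- existence of a positive global maximum
  have hmem : {y : ℝ | |y| < v xs} ∈ 𝓝 (0 : ℝ) :=
    (isOpen_lt _root_.continuous_abs continuous_const).mem_nhds (by simpa using hxs)
  obtain ⟨K, hKc, hKsub⟩ := mem_cocompact.mp (hdecay hmem)
  set S := {x : Ed d | v xs ≤ v x} with hSdef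
  have hSclosed : IsClosed S := isClosed_le continuous_const hvC
  have hSsub : S ⊆ K := by
    intro x hx
    by_contra hxK
    have h2 : |v x| < v xs := hKsub hxK
    have h3 := le_abs_self (v x)
    have hx' : v xs ≤ v x := hx
    linarith
  have hScomp : IsCompact S := hKc.of_isClosed_subset hSclosed hSsub
  have hxsmem : xs ∈ S := by simp only [hSdef, Set.mem_setOf_eq]; exact le_refl _
  obtain ⟨x₀, hx₀S, hx₀max⟩ := hScomp.exists_isMaxOn ⟨xs, hxsmem⟩ hvC.continuousOn
  rw [isMaxOn_iff] at hx₀max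
  have hglob : ∀ y, v y ≤ v x₀ := by
    intro y
    by_cases h : v xs ≤ v y
    · exact hx₀max y h
    · have := hx₀max xs hxsmem
      linarith [lt_of_not_ge h]
  have hx₀pos : 0 < v x₀ := lt_of_lt_of_le hxs (hx₀max xs hxsmem)
  -- key per-coordinate facts at the maximum point
  have key : ∀ i : Fin d,
      (∫ ξ, G i ξ * injRes_eK x₀ ξ) = 0 ∧
      0 ≤ (∫ ξ, (((ξ i : ℝ) ^ 2 : ℝ) : ℂ) * (Fv ξ * injRes_eK x₀ ξ)).re := by
    intro i
    set F1 : ℝ → Ed d → ℂ := fun t ξ =>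
      Fv ξ * Complex.exp (Complex.I * ((inner ℝ x₀ ξ + t * ξ i : ℝ) : ℂ)) with hF1
    set F2 : ℝ → Ed d → ℂ := fun t ξ => Complex.I * ((ξ i : ℝ) : ℂ) * F1 t ξ with hF2
    set F3 : ℝ → Ed d → ℂ := fun t ξ => (Complex.I * ((ξ i : ℝ) : ℂ)) ^ 2 * F1 t ξ with hF3
    have hconte : ∀ t : ℝ, Continuous fun ξ : Ed d =>
        Complex.exp (Complex.I * ((inner ℝ x₀ ξ + t * ξ i : ℝ) : ℂ)) := fun t =>
      Complex.continuous_exp.comp (continuous_const.mul (Complex.continuous_ofReal.comp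
        ((continuous_const.inner continuous_id).add (continuous_const.mul (hcoord i)))))
    have hnorm1 : ∀ (t : ℝ) (ξ : Ed d), ‖F1 t ξ‖ = ‖Fv ξ‖ := fun t ξ => by
      simp [hF1, Complex.norm_exp]
    have hmeas1 : ∀ t : ℝ, AEStronglyMeasurable (F1 t) volume := fun t =>
      mFv.mul (hconte t).aestronglyMeasurable
    have hmeas2 : ∀ t : ℝ, AEStronglyMeasurable (F2 t) volume := fun t =>
      ((continuous_const.mul (Complex.continuous_ofReal.comp
        (hcoord i))).aestronglyMeasurable).mul (hmeas1 t)
    have hmeas3 : ∀ t : ℝ, AEStronglyMeasurable (F3 t) volume := fun t =>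
      (((continuous_const.mul (Complex.continuous_ofReal.comp (hcoord i))).pow
        2).aestronglyMeasurable).mul (hmeas1 t)
    have hint1 : ∀ t : ℝ, Integrable (F1 t) := fun t => by
      refine hv.intF.norm.mono' (hmeas1 t) ?_
      filter_upwards with ξ
      rw [hnorm1]
    have hint2 : ∀ t : ℝ, Integrable (F2 t) := fun t => by
      refine int1.mono' (hmeas2 t) ?_
      filter_upwards with ξ
      have h1 : |ξ i| ≤ ‖ξ‖ := injRes_abs_coord ξ i
      have h2 : ‖F2 t ξ‖ = |ξ i| * ‖Fv ξ‖ := by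
        rw [hF2]
        simp only [norm_mul, hnorm1, Complex.norm_I, one_mul]
        simp [Real.norm_eq_abs]
      rw [h2]
      have h3 : |ξ i| ≤ 1 + ‖ξ‖ := by have := norm_nonneg ξ; linarith
      exact mul_le_mul_of_nonneg_right h3 (norm_nonneg _)
    have hd12 : ∀ (t : ℝ) (ξ : Ed d), HasDerivAt (fun t => F1 t ξ) (F2 t ξ) t := by
      intro t ξ
      have h1 : HasDerivAt (fun t : ℝ => inner ℝ x₀ ξ + t * ξ i) (ξ i) t := by
        simpa using ((hasDerivAt_id t).mul_const (ξ i)).const_add (inner ℝ x₀ ξ : ℝ)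
      have h3 := ((h1.ofReal_comp.const_mul Complex.I).cexp).const_mul (Fv ξ)
      refine h3.congr_deriv ?_
      rw [hF2, hF1]
      ring
    have hd23 : ∀ (t : ℝ) (ξ : Ed d), HasDerivAt (fun t => F2 t ξ) (F3 t ξ) t := by
      intro t ξ
      have h3 := (hd12 t ξ).const_mul (Complex.I * ((ξ i : ℝ) : ℂ))
      have hfe : (fun t => Complex.I * ((ξ i : ℝ) : ℂ) * F1 t ξ) = fun t => F2 t ξ := by
        funext t; rw [hF2]
      rw [hfe] at h3
      refine h3.congr_deriv ?_
      rw [hF3, hF2]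
      ring
    have HD1 : ∀ t₀ : ℝ, HasDerivAt (fun t => ∫ ξ, F1 t ξ) (∫ ξ, F2 t₀ ξ) t₀ := by
      intro t₀
      refine (hasDerivAt_integral_of_dominated_loc_of_deriv_le (Metric.ball_mem_nhds t₀ one_pos)
        (Eventually.of_forall fun t => hmeas1 t) (hint1 t₀) (hmeas2 t₀) ?_ int1 ?_).2
      · filter_upwards with ξ
        intro t _
        have h1 : |ξ i| ≤ ‖ξ‖ := injRes_abs_coord ξ i
        have h2 : ‖F2 t ξ‖ = |ξ i| * ‖Fv ξ‖ := by
          rw [hF2]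
          simp only [norm_mul, hnorm1, Complex.norm_I, one_mul]
          simp [Real.norm_eq_abs]
        rw [h2]
        have h3 : |ξ i| ≤ 1 + ‖ξ‖ := by have := norm_nonneg ξ; linarith
        exact mul_le_mul_of_nonneg_right h3 (norm_nonneg _)
      · filter_upwards with ξ
        intro t _
        exact hd12 t ξ
    have HD2 : ∀ t₀ : ℝ, HasDerivAt (fun t => ∫ ξ, F2 t ξ) (∫ ξ, F3 t₀ ξ) t₀ := by
      intro t₀
      refine (hasDerivAt_integral_of_dominated_loc_of_deriv_le (Metric.ball_mem_nhds t₀ one_pos)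
        (Eventually.of_forall fun t => hmeas2 t) (hint2 t₀) (hmeas3 t₀) ?_ intNnorm ?_).2
      · filter_upwards with ξ
        intro t _
        have h1 : |ξ i| ≤ ‖ξ‖ := injRes_abs_coord ξ i
        have h2 : ‖F3 t ξ‖ = |ξ i| ^ 2 * ‖Fv ξ‖ := by
          rw [hF3]
          simp only [norm_mul, norm_pow, hnorm1, Complex.norm_I, one_mul]
          simp [Real.norm_eq_abs]
        rw [h2]
        have h3 : |ξ i| ^ 2 ≤ ‖ξ‖ ^ 2 :=
          pow_le_pow_left₀ (abs_nonneg _) h1 2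
        exact mul_le_mul_of_nonneg_right h3 (norm_nonneg _)
      · filter_upwards with ξ
        intro t _
        exact hd23 t ξ
    -- the slice of v
    have hrepr : ∀ t : ℝ, (v (x₀ + t • EuclideanSpace.single i (1:ℝ)) : ℂ) = ∫ ξ, F1 t ξ := by
      intro t
      rw [hv.repr]
      refine integral_congr_ae (Eventually.of_forall fun ξ => ?_)
      have hin : (inner ℝ (x₀ + t • EuclideanSpace.single i (1:ℝ)) ξ : ℝ)
          = inner ℝ x₀ ξ + t * ξ i := by
        simp [inner_add_left, real_inner_smul_left, EuclideanSpace.inner_single_left]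
      show Fv ξ * Complex.exp (Complex.I *
        ((inner ℝ (x₀ + t • EuclideanSpace.single i (1:ℝ)) ξ : ℝ) : ℂ)) = F1 t ξ
      rw [hin, hF1]
    have hρ : ∀ t : ℝ, v (x₀ + t • EuclideanSpace.single i (1:ℝ)) = (∫ ξ, F1 t ξ).re :=
      fun t => by rw [← hrepr t]; exact (Complex.ofReal_re _).symm
    have hρd : ∀ t : ℝ, HasDerivAt (fun t => v (x₀ + t • EuclideanSpace.single i (1:ℝ)))
        ((∫ ξ, F2 t ξ).re) t := by
      intro t
      have h := Complex.reCLM.hasFDerivAt.comp_hasDerivAt t (HD1 t)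
      simp only [Function.comp, Complex.reCLM_apply] at h
      exact h.congr_of_eventuallyEq (Eventually.of_forall fun t => hρ t)
    have hmaxρ : IsLocalMax (fun t : ℝ => v (x₀ + t • EuclideanSpace.single i (1:ℝ))) (0:ℝ) := by
      refine Eventually.of_forall fun t => ?_
      simpa using hglob (x₀ + t • EuclideanSpace.single i (1:ℝ))
    have hre0 : (∫ ξ, F2 0 ξ).re = 0 := hmaxρ.hasDerivAt_eq_zero (hρd 0)
    have him0 : (∫ ξ, F2 0 ξ).im = 0 := by
      have himAll : (fun t : ℝ => (∫ ξ, F1 t ξ).im) = fun _ => (0:ℝ) := by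
        funext t; rw [← hrepr t]; exact Complex.ofReal_im _
      have h := Complex.imCLM.hasFDerivAt.comp_hasDerivAt 0 (HD1 0)
      have h2 : HasDerivAt (fun _ : ℝ => (0:ℝ)) ((∫ ξ, F2 0 ξ).im) 0 :=
        h.congr_of_eventuallyEq (Eventually.of_forall fun t : ℝ =>
          (congrFun himAll t).symm)
      exact h2.unique (hasDerivAt_const 0 0)
    have hD0 : (∫ ξ, F2 0 ξ) = 0 := by
      apply Complex.ext <;> simp [hre0, him0]
    have hsec : (∫ ξ, F3 0 ξ).re ≤ 0 := by
      refine injRes_secondDerivTest hρd ?_ hmaxρ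
      have h := Complex.reCLM.hasFDerivAt.comp_hasDerivAt 0 (HD2 0)
      simp only [Function.comp, Complex.reCLM_apply] at h
      exact h
    have hF10 : ∀ ξ : Ed d, F1 0 ξ = Fv ξ * injRes_eK x₀ ξ := fun ξ => by
      rw [hF1, injRes_eK]
      norm_num
    constructor
    · rw [← hD0]
      refine integral_congr_ae (Eventually.of_forall fun ξ => ?_)
      simp only [hGdef, hF2, hF1, injRes_eK, zero_mul, add_zero]
      ring
    · have hneg : (∫ ξ, F3 0 ξ)
          = - ∫ ξ, (((ξ i : ℝ) ^ 2 : ℝ) : ℂ) * (Fv ξ * injRes_eK x₀ ξ) := by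
        rw [← integral_neg]
        refine integral_congr_ae (Eventually.of_forall fun ξ => ?_)
        simp only [hF3, hF1, injRes_eK, zero_mul, add_zero]
        have hI : (Complex.I * ((ξ i : ℝ) : ℂ)) ^ 2 = -(((ξ i : ℝ) : ℂ) ^ 2) := by
          rw [mul_pow, Complex.I_sq]; ring
        rw [hI]
        push_cast
        ring
      rw [hneg] at hsec
      simp only [Complex.neg_re] at hsec
      linarith
  -- the Laplacian term is nonneg
  have intTerm : ∀ i : Fin d,
      Integrable fun ξ : Ed d => (((ξ i : ℝ) ^ 2 : ℝ) : ℂ) * (Fv ξ * injRes_eK x₀ ξ) := by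
    intro i
    refine intNnorm.mono' ((Complex.continuous_ofReal.comp
      ((hcoord i).pow 2)).aestronglyMeasurable.mul
      (mFv.mul (injRes_cont_eK_right x₀).aestronglyMeasurable)) ?_
    filter_upwards with ξ
    have h1 : |ξ i| ≤ ‖ξ‖ := injRes_abs_coord ξ i
    have h2 : ‖(((ξ i : ℝ) ^ 2 : ℝ) : ℂ) * (Fv ξ * injRes_eK x₀ ξ)‖
        = (ξ i) ^ 2 * ‖Fv ξ‖ := by
      rw [norm_mul, norm_mul, injRes_norm_eK, mul_one, Complex.norm_real, Real.norm_eq_abs,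
        _root_.abs_of_nonneg (sq_nonneg (ξ i))]
    rw [h2]
    have h3 : (ξ i) ^ 2 ≤ ‖ξ‖ ^ 2 := by
      rw [← _root_.sq_abs]
      exact pow_le_pow_left₀ (abs_nonneg _) h1 2
    exact mul_le_mul_of_nonneg_right h3 (norm_nonneg _)
  have hLap : 0 ≤ (∫ ξ, ((‖ξ‖ ^ 2 : ℝ) : ℂ) * (Fv ξ * injRes_eK x₀ ξ)).re := by
    have hsum : (∫ ξ, ((‖ξ‖ ^ 2 : ℝ) : ℂ) * (Fv ξ * injRes_eK x₀ ξ))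
        = ∑ i, ∫ ξ, (((ξ i : ℝ) ^ 2 : ℝ) : ℂ) * (Fv ξ * injRes_eK x₀ ξ) := by
      rw [← integral_finset_sum _ fun i _ => intTerm i]
      refine integral_congr_ae (Eventually.of_forall fun ξ => ?_)
      beta_reduce
      rw [← Finset.sum_mul]
      congr 1
      rw [injRes_norm_sq ξ]
      push_cast
      rfl
    rw [hsum, Complex.re_sum]
    exact Finset.sum_nonneg fun i _ => (key i).2
  -- the drift term vanishes
  have hMuZero : (∫ ξ, muGradHat d M Fv ξ * injRes_eK x₀ ξ) = 0 := by
    have hterm : ∀ i : Fin d, (∫ ξ, c i ξ * injRes_eK x₀ ξ) = 0 := by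
      intro i
      have hΨ : Integrable (Function.uncurry fun ξ η : Ed d =>
          G i η * M i (ξ - η) * injRes_eK x₀ ξ) (volume.prod volume) := by
        refine (hΦ i).norm.mono' ((hΦ i).aestronglyMeasurable.mul
          ((injRes_cont_eK_right x₀).comp continuous_fst).aestronglyMeasurable) ?_
        filter_upwards with p
        have hone : ‖injRes_eK x₀ p.1‖ = 1 := injRes_norm_eK _ _
        simp only [Function.uncurry, norm_mul, hone, mul_one, le_refl]
      have h1 : (∫ ξ, c i ξ * injRes_eK x₀ ξ)
          = ∫ ξ, ∫ η, G i η * M i (ξ - η) * injRes_eK x₀ ξ := by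
        refine integral_congr_ae (Eventually.of_forall fun ξ => ?_)
        simp only [hcdef]
        exact (integral_mul_const _ _).symm
      have h2 : (∫ ξ, ∫ η, G i η * M i (ξ - η) * injRes_eK x₀ ξ)
          = ∫ η, ∫ ξ, G i η * M i (ξ - η) * injRes_eK x₀ ξ := integral_integral_swap hΨ
      have h3 : ∀ η : Ed d, (∫ ξ, G i η * M i (ξ - η) * injRes_eK x₀ ξ)
          = G i η * injRes_eK x₀ η * ((μ i x₀ : ℝ) : ℂ) := by
        intro η
        rw [show (fun ξ : Ed d => G i η * M i (ξ - η) * injRes_eK x₀ ξ)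
          = fun ξ => G i η * (M i (ξ - η) * injRes_eK x₀ ξ) from funext fun ξ => by ring]
        rw [integral_const_mul]
        have htr : (∫ ξ, M i (ξ - η) * injRes_eK x₀ ξ)
            = ((μ i x₀ : ℝ) : ℂ) * injRes_eK x₀ η := by
          have hfun : (fun ξ : Ed d => M i (ξ - η) * injRes_eK x₀ ξ)
              = fun ξ => (fun ζ : Ed d => M i ζ * injRes_eK x₀ (ζ + η)) (ξ - η) := by
            funext ξ
            simp [sub_add_cancel]
          rw [hfun, integral_sub_right_eq_self (fun ζ : Ed d => M i ζ * injRes_eK x₀ (ζ + η)) η]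
          have hsplit2 : (fun ζ : Ed d => M i ζ * injRes_eK x₀ (ζ + η))
              = fun ζ => (M i ζ * injRes_eK x₀ ζ) * injRes_eK x₀ η := by
            funext ζ
            rw [injRes_eK_add]
            ring
          rw [hsplit2, integral_mul_const]
          have hrepr := ((hμ i).repr x₀).symm
          rw [show (∫ ζ, M i ζ * injRes_eK x₀ ζ) = ((μ i x₀ : ℝ) : ℂ) from hrepr]
        rw [htr]
        ring
      rw [h1, h2]
      simp_rw [h3]
      rw [integral_mul_const, (key i).1]
      ring
    have hfe : (fun ξ => muGradHat d M Fv ξ * injRes_eK x₀ ξ)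
        = fun ξ => ∑ i, c i ξ * injRes_eK x₀ ξ := by
      funext ξ
      rw [hmu_eq ξ, Finset.sum_mul]
    rw [hfe, integral_finset_sum _ fun i _ => injRes_integrable_mul_eK (intc i) x₀]
    exact Finset.sum_eq_zero fun i _ => hterm i
  -- integrate the Fourier-side equation against the kernel at x₀
  have hker : (∫ ξ, (((γ + ‖ξ‖ ^ 2 : ℝ) : ℂ) * Fv ξ + muGradHat d M Fv ξ) * injRes_eK x₀ ξ)
      = 0 := by
    refine integral_eq_zero_of_ae ?_
    filter_upwards [heq] with ξ h
    rw [h, zero_mul]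
    rfl
  set A : Ed d → ℂ := fun ξ => (γ : ℂ) * (Fv ξ * injRes_eK x₀ ξ) with hAdef
  set B : Ed d → ℂ := fun ξ => ((‖ξ‖ ^ 2 : ℝ) : ℂ) * (Fv ξ * injRes_eK x₀ ξ) with hBdef
  set C : Ed d → ℂ := fun ξ => muGradHat d M Fv ξ * injRes_eK x₀ ξ with hCdef
  have intA : Integrable A := (injRes_integrable_mul_eK hv.intF x₀).const_mul _
  have intB : Integrable B := by
    refine (injRes_integrable_mul_eK intN x₀).congr ?_
    filter_upwards with ξ
    rw [hBdef]
    ring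
  have intC : Integrable C := injRes_integrable_mul_eK intMu x₀
  have hsplit : (∫ ξ, (((γ + ‖ξ‖ ^ 2 : ℝ) : ℂ) * Fv ξ + muGradHat d M Fv ξ) * injRes_eK x₀ ξ)
      = (∫ ξ, A ξ) + (∫ ξ, B ξ) + (∫ ξ, C ξ) := by
    have hfe2 : (fun ξ => (((γ + ‖ξ‖ ^ 2 : ℝ) : ℂ) * Fv ξ + muGradHat d M Fv ξ)
        * injRes_eK x₀ ξ) = fun ξ => (A ξ + B ξ) + C ξ := by
      funext ξ
      rw [hAdef, hBdef, hCdef]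
      push_cast
      ring
    have e1 : (∫ ξ, (A ξ + B ξ) + C ξ) = (∫ ξ, A ξ + B ξ) + ∫ ξ, C ξ :=
      integral_add (intA.add intB) intC
    have e2 : (∫ ξ, A ξ + B ξ) = (∫ ξ, A ξ) + ∫ ξ, B ξ := integral_add intA intB
    rw [hfe2, e1, e2]
  have hA : (∫ ξ, A ξ) = (γ : ℂ) * ((v x₀ : ℝ) : ℂ) := by
    rw [hAdef, integral_const_mul]
    congr 1
    exact (hVeq x₀).symm
  rw [hsplit, hA, hMuZero, add_zero] at hker
  have hre := congrArg Complex.re hker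
  simp only [Complex.add_re, Complex.zero_re] at hre
  have hgv : ((γ : ℂ) * ((v x₀ : ℝ) : ℂ)).re = γ * v x₀ := by
    rw [← Complex.ofReal_mul]
    exact Complex.ofReal_re _
  rw [hgv] at hre
  have hpos : 0 < γ * v x₀ := mul_pos hγ hx₀pos
  linarith

end InjResAux

/-- for `s ≥ 1`, `γ > 0`, `μ` with components in `B^{s-1}(ℝ^d)`, any `v ∈ B^s(ℝ^d)`
satisfying `γv - Δv + μ·∇v = 0` on `ℝ^d` (on the Fourier side:
`(γ+|ξ|²) v̂(ξ) + (μ·∇v)^(ξ) = 0` a.e.) vanishes identically. -/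
theorem injective_resolvent (d : ℕ) (s γ : ℝ) (hs : 1 ≤ s) (hγ : 0 < γ)
    (μ : Fin d → Ed d → ℝ) (M : Fin d → Ed d → ℂ)
    (hμ : ∀ i, BarronRep d (s - 1) (μ i) (M i))
    (v : Ed d → ℝ) (Fv : Ed d → ℂ) (hv : BarronRep d s v Fv)
    (heq : ∀ᵐ ξ : Ed d, ((γ + ‖ξ‖ ^ 2 : ℝ) : ℂ) * Fv ξ + muGradHat d M Fv ξ = 0) :
    ∀ x, v x = 0 := by
  have h1 := injRes_nonpos d s γ hs hγ μ M hμ v Fv hv heq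
  have hv' : BarronRep d s (fun x => -(v x)) (fun ξ => -(Fv ξ)) := by
    refine ⟨hv.intF.neg, ?_, ?_⟩
    · refine hv.intW.congr ?_
      filter_upwards with ξ
      simp
    · intro x
      rw [show ((-(v x) : ℝ) : ℂ) = -((v x : ℝ) : ℂ) from by push_cast; ring, hv.repr x,
        ← integral_neg]
      refine integral_congr_ae (Eventually.of_forall fun ξ => ?_)
      ring
  have hmgh : ∀ ξ, muGradHat d M (fun ξ => -(Fv ξ)) ξ = -(muGradHat d M Fv ξ) := by
    intro ξ
    unfold muGradHat
    rw [← Finset.sum_neg_distrib]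
    refine Finset.sum_congr rfl fun i _ => ?_
    rw [← integral_neg]
    refine integral_congr_ae (Eventually.of_forall fun η => ?_)
    ring
  have heq' : ∀ᵐ ξ : Ed d, ((γ + ‖ξ‖ ^ 2 : ℝ) : ℂ) * (-(Fv ξ))
      + muGradHat d M (fun ξ => -(Fv ξ)) ξ = 0 := by
    filter_upwards [heq] with ξ h
    rw [hmgh]
    linear_combination -h
  have h2 := injRes_nonpos d s γ hs hγ μ M hμ (fun x => -(v x)) (fun ξ => -(Fv ξ)) hv' heq'
  intro x
  have ha := h1 x
  have hb := h2 x
  simp only [neg_nonpos] at hb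
  linarith
end
end
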